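/- Let f : ℝ² → ℝ be continuously differentiable and define the Lagrangian density L : ℝ³ × ℝ³ → ℝ by L(E, B) = f( (|E|² − |B|²)/2 , E·B ). Set D := ∇_E L(E,B) and H := −∇_B L(E,B), and consider the 4×4 tensor T(E,B) with block structure: T₀₀ = L − E·D, T₀ⱼ = (H × E)ⱼ for j = 1,2,3, Tⱼ₀ = (D × B)ⱼ, and lower-right 3×3 block (L + B·H) I₃ − E ⊗ D − H ⊗ B. Then for every (E, B) ∈ ℝ³ × ℝ³ the matrix diag(−1, 1, 1, 1) · T(E,B) is symmetric; equivalently, D × B + H × E = 0 and E ⊗ D + H ⊗ B is a symmetric 3×3 matrix. -/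

import Mathlib

open Matrix
open scoped BigOperators

/-- The electromagnetic energy–momentum tensor of the second Variational Principle, indexed by
`Fin 1 ⊕ Fin 3` (time index `Sum.inl 0`, space indices `Sum.inr j`). -/
noncomputable def Tem (L : (Fin 3 → ℝ) × (Fin 3 → ℝ) → ℝ)
    (E B D H : Fin 3 → ℝ) : Matrix (Fin 1 ⊕ Fin 3) (Fin 1 ⊕ Fin 3) ℝ :=
  Matrix.fromBlocks
    (Matrix.of fun _ _ : Fin 1 => L (E, B) - E ⬝ᵥ D)
    (Matrix.of fun _ j => crossProduct H E j)
    (Matrix.of fun i _ => crossProduct D B i)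
    (Matrix.of fun i j =>
      (L (E, B) + B ⬝ᵥ H) * (if i = j then 1 else 0) - E i * D j - H i * B j)

lemma fderiv_key (f : ℝ × ℝ → ℝ) (hf : ContDiff ℝ 1 f) (E B : Fin 3 → ℝ)
    (v : (Fin 3 → ℝ) × (Fin 3 → ℝ)) :
    fderiv ℝ (fun p : (Fin 3 → ℝ) × (Fin 3 → ℝ) =>
        f (((∑ i, p.1 i ^ 2) - ∑ i, p.2 i ^ 2) / 2, p.1 ⬝ᵥ p.2)) (E, B) v =
      fderiv ℝ f (((∑ i, E i ^ 2) - ∑ i, B i ^ 2) / 2, E ⬝ᵥ B)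
        (E ⬝ᵥ v.1 - B ⬝ᵥ v.2, E ⬝ᵥ v.2 + B ⬝ᵥ v.1) := by
  set le : Fin 3 → ((Fin 3 → ℝ) × (Fin 3 → ℝ)) →L[ℝ] ℝ := fun i =>
    (ContinuousLinearMap.proj i).comp (ContinuousLinearMap.fst ℝ (Fin 3 → ℝ) (Fin 3 → ℝ)) with hle
  set lb : Fin 3 → ((Fin 3 → ℝ) × (Fin 3 → ℝ)) →L[ℝ] ℝ := fun i =>
    (ContinuousLinearMap.proj i).comp (ContinuousLinearMap.snd ℝ (Fin 3 → ℝ) (Fin 3 → ℝ)) with hlb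
  have h1 : HasFDerivAt (fun p : (Fin 3 → ℝ) × (Fin 3 → ℝ) => ∑ i, p.1 i ^ 2)
      (∑ i : Fin 3, (E i • le i + E i • le i)) (E, B) := by
    have : HasFDerivAt (fun p : (Fin 3 → ℝ) × (Fin 3 → ℝ) => ∑ i, p.1 i * p.1 i)
        (∑ i : Fin 3, (E i • le i + E i • le i)) (E, B) :=
      HasFDerivAt.fun_sum fun i _ =>
        ((le i).hasFDerivAt (x := (E, B))).mul ((le i).hasFDerivAt (x := (E, B)))
    simpa only [pow_two] using this
  have h2 : HasFDerivAt (fun p : (Fin 3 → ℝ) × (Fin 3 → ℝ) => ∑ i, p.2 i ^ 2)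
      (∑ i : Fin 3, (B i • lb i + B i • lb i)) (E, B) := by
    have : HasFDerivAt (fun p : (Fin 3 → ℝ) × (Fin 3 → ℝ) => ∑ i, p.2 i * p.2 i)
        (∑ i : Fin 3, (B i • lb i + B i • lb i)) (E, B) :=
      HasFDerivAt.fun_sum fun i _ =>
        ((lb i).hasFDerivAt (x := (E, B))).mul ((lb i).hasFDerivAt (x := (E, B)))
    simpa only [pow_two] using this
  have h3 : HasFDerivAt (fun p : (Fin 3 → ℝ) × (Fin 3 → ℝ) => p.1 ⬝ᵥ p.2)
      (∑ i : Fin 3, (E i • lb i + B i • le i)) (E, B) := by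
    have : HasFDerivAt (fun p : (Fin 3 → ℝ) × (Fin 3 → ℝ) => ∑ i, p.1 i * p.2 i)
        (∑ i : Fin 3, (E i • lb i + B i • le i)) (E, B) :=
      HasFDerivAt.fun_sum fun i _ =>
        ((le i).hasFDerivAt (x := (E, B))).mul ((lb i).hasFDerivAt (x := (E, B)))
    simpa only [dotProduct] using this
  have h12 : HasFDerivAt (fun p : (Fin 3 → ℝ) × (Fin 3 → ℝ) =>
      ((∑ i, p.1 i ^ 2) - ∑ i, p.2 i ^ 2) / 2)
      ((2⁻¹ : ℝ) • ((∑ i : Fin 3, (E i • le i + E i • le i))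
        - ∑ i : Fin 3, (B i • lb i + B i • lb i))) (E, B) := by
    have := (h1.sub h2).mul_const (2⁻¹ : ℝ)
    simpa only [div_eq_mul_inv, smul_smul, Pi.sub_apply] using this
  have hg := h12.prodMk h3
  have hfd := (hf.differentiable one_ne_zero).differentiableAt.hasFDerivAt
    (x := (((∑ i, E i ^ 2) - ∑ i, B i ^ 2) / 2, E ⬝ᵥ B))
  have hc := hfd.comp (E, B) hg
  have hfe := hc.fderiv
  simp only [Function.comp_def] at hfe
  rw [hfe]
  simp only [ContinuousLinearMap.comp_apply]
  congr 1
  simp only [ContinuousLinearMap.prod_apply, ContinuousLinearMap.smulRight_apply,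
    ContinuousLinearMap.coe_smul', ContinuousLinearMap.sub_apply, ContinuousLinearMap.sum_apply,
    ContinuousLinearMap.add_apply, ContinuousLinearMap.smul_apply, hle, hlb,
    ContinuousLinearMap.comp_apply, ContinuousLinearMap.proj_apply,
    ContinuousLinearMap.coe_fst', ContinuousLinearMap.coe_snd', smul_eq_mul,
    Prod.mk.injEq, dotProduct]
  constructor
  · simp only [Finset.sum_add_distrib, Finset.sum_sub_distrib]; ring
  · simp only [Finset.sum_add_distrib]

theorem stmt12 (f : ℝ × ℝ → ℝ) (hf : ContDiff ℝ 1 f)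
    (L : (Fin 3 → ℝ) × (Fin 3 → ℝ) → ℝ)
    (hL : ∀ E B : Fin 3 → ℝ,
      L (E, B) = f (((∑ i, E i ^ 2) - ∑ i, B i ^ 2) / 2, E ⬝ᵥ B)) :
    ∀ E B : Fin 3 → ℝ,
      ∀ D H : Fin 3 → ℝ,
      (∀ i, D i = fderiv ℝ L (E, B) (Pi.single i 1, 0)) →
      (∀ i, H i = -fderiv ℝ L (E, B) (0, Pi.single i 1)) →
      ((Matrix.diagonal (Sum.elim (fun _ : Fin 1 => (-1 : ℝ)) fun _ : Fin 3 => 1)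
          * Tem L E B D H).IsSymm ∧
        crossProduct D B + crossProduct H E = 0 ∧
        (Matrix.of fun i j : Fin 3 => E i * D j + H i * B j).IsSymm) := by
  intro E B D H hD hH
  have hLfun : L = fun p : (Fin 3 → ℝ) × (Fin 3 → ℝ) =>
      f (((∑ i, p.1 i ^ 2) - ∑ i, p.2 i ^ 2) / 2, p.1 ⬝ᵥ p.2) := by
    funext p; obtain ⟨E, B⟩ := p; exact hL E B
  set q : ℝ × ℝ := (((∑ i, E i ^ 2) - ∑ i, B i ^ 2) / 2, E ⬝ᵥ B) with hq
  set a : ℝ := fderiv ℝ f q (1, 0) with ha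
  set b : ℝ := fderiv ℝ f q (0, 1) with hb
  have hlin : ∀ x y : ℝ, fderiv ℝ f q (x, y) = x * a + y * b := by
    intro x y
    have hxy : (x, y) = x • ((1 : ℝ), (0 : ℝ)) + y • ((0 : ℝ), (1 : ℝ)) := by
      simp [Prod.ext_iff]
    rw [hxy, map_add, (fderiv ℝ f q).map_smul, (fderiv ℝ f q).map_smul, ha, hb, smul_eq_mul, smul_eq_mul]
  have hDi : ∀ i, D i = a * E i + b * B i := by
    intro i
    rw [hD i, hLfun, fderiv_key f hf E B]
    simp only [dotProduct_single, dotProduct_zero, mul_one, sub_zero, zero_add]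
    rw [← hq, hlin]
    ring
  have hHi : ∀ i, H i = a * B i - b * E i := by
    intro i
    rw [hH i, hLfun, fderiv_key f hf E B]
    simp only [dotProduct_single, dotProduct_zero, mul_one, zero_sub, add_zero]
    rw [← hq, hlin]
    ring
  have hcross : crossProduct D B + crossProduct H E = 0 := by
    funext i
    fin_cases i <;>
      simp [crossProduct, hDi, hHi] <;> ring
  have hsym3 : (Matrix.of fun i j : Fin 3 => E i * D j + H i * B j).IsSymm := by
    unfold Matrix.IsSymm
    ext i j
    simp only [Matrix.transpose_apply, Matrix.of_apply, hDi, hHi]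
    ring
  refine ⟨?_, hcross, hsym3⟩
  unfold Matrix.IsSymm
  ext i j
  have hc : ∀ k, crossProduct D B k = -crossProduct H E k := by
    intro k
    have := congrFun hcross k
    simpa [eq_neg_iff_add_eq_zero] using this
  rcases i with i | i <;> rcases j with j | j <;>
    simp [Tem, Matrix.transpose_apply, Matrix.diagonal_mul, Matrix.fromBlocks]
  · exact hc j
  · exact (hc i).symm
  · have h3 := congrFun (congrFun hsym3 i) j
    simp only [Matrix.transpose_apply, Matrix.of_apply] at h3
    by_cases hij : i = j
    · subst hij; simp only [if_pos rfl]
    · rw [if_neg hij, if_neg (Ne.symm hij)]; linarith [h3]
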